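/- Greedy attachment of fixed D3-branes to the first arrow (key step in the proof that finite type A bow diagrams satisfying the supersymmetry inequalities are supersymmetric): Consider a separated finite type A bow diagram as above and assume s·k + v_s + u_k − v_0 ≥ 0 for every s ∈ {0,...,n} and k ∈ {0,...,w}. Define f = max{ k ∈ {0,...,w} : u_j ≥ k − j for all j ∈ {0,...,k} } (this is the maximal number of fixed D3-branes attachable to ○_1 without breaking supersymmetry; the defining set contains k = 0, so f is well defined). Then: (i) f = 0 if and only if v_0 = 0; (ii) v_1 ≥ v_0 − f; (iii) there exists j ∈ {0,...,f} with u_j = f − j. -/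
import Mathlib


/-- **Greedy attachment of fixed D3-branes to the first arrow.**  Consider a separated
finite type A bow diagram (segment dimensions `v n = 0, ..., v 1, v 0` and
`u 0 = v 0, u 1, ..., u (w-1), u w = 0`) satisfying `s·k + v_s + u_k - v_0 ≥ 0` for all
`0 ≤ s ≤ n`, `0 ≤ k ≤ w`.  Let `f = max { k ∈ {0,...,w} : u_j ≥ k - j for all 0 ≤ j ≤ k }`
(encoded by: `f` belongs to the set and dominates every member).  Then:
(i) `f = 0` iff `v 0 = 0`; (ii) `v 1 ≥ v 0 - f`; (iii) there is `j ≤ f` with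
`u j = f - j`. -/
theorem greedy_attachment_to_first_arrow
    (n w : ℕ) (hn : 1 ≤ n) (hw : 1 ≤ w)
    (v u : ℕ → ℤ) (hvn : v n = 0) (hu0 : u 0 = v 0) (huw : u w = 0)
    (hineq : ∀ s k : ℕ, s ≤ n → k ≤ w → 0 ≤ (s : ℤ) * k + v s + u k - v 0)
    (f : ℕ) (hfw : f ≤ w)
    (hfmem : ∀ j : ℕ, j ≤ f → (f : ℤ) - j ≤ u j)
    (hfmax : ∀ k : ℕ, k ≤ w → (∀ j : ℕ, j ≤ k → (k : ℤ) - j ≤ u j) → k ≤ f) :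
    (f = 0 ↔ v 0 = 0) ∧ (v 0 - f ≤ v 1) ∧ (∃ j : ℕ, j ≤ f ∧ u j = (f : ℤ) - j) := by
  have hunn : ∀ k : ℕ, k ≤ w → 0 ≤ u k := by
    intro k hk
    have := hineq 0 k (by omega) hk
    push_cast at this
    linarith
  have hv0 : 0 ≤ v 0 := by have := hunn 0 (by omega); linarith
  have hiii : ∃ j : ℕ, j ≤ f ∧ u j = (f : ℤ) - j := by
    rcases eq_or_lt_of_le hfw with hfw' | hfw'
    · exact ⟨f, le_refl f, by rw [hfw', huw]; push_cast; ring⟩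
    · by_contra hcon
      push_neg at hcon
      have hmem : ∀ j : ℕ, j ≤ f + 1 → ((f : ℤ) + 1) - j ≤ u j := by
        intro j hj
        rcases Nat.lt_or_ge j (f + 1) with h | h
        · have hjf : j ≤ f := by omega
          have h1 := hfmem j hjf
          have h2 : (f : ℤ) - j < u j := lt_of_le_of_ne h1 (Ne.symm (hcon j hjf))
          linarith
        · have hj1 : j = f + 1 := by omega
          have := hunn j (by omega)
          rw [hj1]; push_cast; linarith [hj1 ▸ this]
      have := hfmax (f + 1) (by omega) (by
        intro j hj
        have := hmem j hj
        push_cast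
        linarith)
      omega
  refine ⟨⟨?_, ?_⟩, ?_, hiii⟩
  · intro hf0
    by_contra hv
    have hv1 : 1 ≤ v 0 := by omega
    have : 1 ≤ f := by
      apply hfmax 1 hw
      intro j hj
      interval_cases j
      · rw [hu0]; push_cast; linarith
      · have := hunn 1 hw; push_cast; linarith
    omega
  · intro hv
    have := hfmem 0 (Nat.zero_le f)
    rw [hu0, hv] at this
    push_cast at this
    omega
  · obtain ⟨j, hjf, hj⟩ := hiii
    have := hineq 1 j hn (le_trans hjf hfw)
    rw [hj] at this
    push_cast at this
    linarith
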